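/- For n sufficiently large, the number pnw(n) of 1-prefix normal binary words of length n satisfies pnw(n) ≥ 2^{n − 4√(n log₂ n)}. -/

import Mathlib

/-- `w` is 1-prefix normal: no factor of `w` has more 1s than the prefix of the same length. -/
def IsPrefixNormal1 (w : List Bool) : Prop :=
  ∀ v : List Bool, v <:+: w → v.count true ≤ (w.take v.length).count true

/-- The number of 1-prefix normal words of length `n`. -/
noncomputable def pnw (n : ℕ) : ℕ :=
  Nat.card {w : List Bool // w.length = n ∧ IsPrefixNormal1 w}

open List


lemma cnt_split (v : List Bool) (s ℓ : ℕ) :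
    (v.take (s + ℓ)).count true = (v.take s).count true + ((v.drop s).take ℓ).count true := by
  rw [List.take_add, List.count_append]

lemma add_div_le (x y b : ℕ) (hb : 0 < b) : (x + y) / b ≤ x / b + y / b + 1 := by
  have h1 : x + y = b * (x / b + y / b) + (x % b + y % b) := by
    have hx := Nat.div_add_mod x b
    have hy := Nat.div_add_mod y b
    ring_nf; omega
  rw [h1, Nat.mul_add_div hb]
  have h2 : (x % b + y % b) / b ≤ 1 := by
    apply Nat.lt_succ_iff.mp
    apply Nat.div_lt_of_lt_mul
    have := Nat.mod_lt x hb; have := Nat.mod_lt y hb; omega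
  omega

lemma pn_of_bounds (b d t : ℕ) (hb : 0 < b) (v : List Bool)
    (hU : ∀ ℓ, (v.take ℓ).count true ≤ d * (ℓ / b) + d)
    (hL : ∀ ℓ, ℓ ≤ v.length → d * (ℓ / b) ≤ (v.take ℓ).count true)
    (ht : d * (t / b) + 3 * d ≤ t) :
    IsPrefixNormal1 (List.replicate t true ++ v) := by
  intro u hinf
  set w := List.replicate t true ++ v with hw
  obtain ⟨x, y, hxy⟩ := hinf
  set s := x.length with hs
  set L := u.length with hLdef
  have hLw : s + L ≤ w.length := by
    rw [← hxy]; simp; omega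
  have hwlen : w.length = t + v.length := by simp [hw]
  have hu : u = (w.drop s).take L := by
    rw [← hxy, List.append_assoc, List.drop_left, List.take_left]
  -- prefix counts
  have hpre_small : ∀ ℓ ≤ t, (w.take ℓ).count true = ℓ := by
    intro ℓ hℓ
    rw [hw, List.take_append, List.take_replicate,
      List.length_replicate, min_eq_left hℓ, Nat.sub_eq_zero_of_le hℓ]
    simp
  have hpre_big : ∀ ℓ, t ≤ ℓ → (w.take ℓ).count true = t + (v.take (ℓ - t)).count true := by
    intro ℓ hℓ
    rw [hw, List.take_append, List.take_replicate,
      List.length_replicate, min_eq_right hℓ, List.count_append]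
    simp
  rcases le_or_gt L t with hLt | hLt
  · -- trivial case: factor no longer than the 1-block
    rw [hpre_small L hLt]
    exact List.count_le_length (a := true) (l := u)
  · rw [hpre_big L hLt.le]
    have hdrop : w.drop s = List.replicate (t - s) true ++ v.drop (s - t) := by
      rw [hw, List.drop_append, List.drop_replicate, List.length_replicate]
    rcases le_or_gt t s with hst | hst
    · -- factor lies in v
      have h1 : t - s = 0 := by omega
      have hu2 : u = (v.drop (s - t)).take L := by rw [hu, hdrop, h1]; simp
      set s' := s - t with hs'
      have hsv : s' ≤ v.length := by omega
      have hsum : (v.take (s' + L)).count true = (v.take s').count true + u.count true := by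
        rw [hu2]; exact cnt_split v s' L
      have h3 : u.count true + (v.take s').count true ≤ d * ((s' + L) / b) + d := by
        rw [Nat.add_comm, ← hsum]; exact hU (s' + L)
      have h4 : d * (s' / b) ≤ (v.take s').count true := hL s' hsv
      have h5 : (s' + L) / b ≤ s' / b + L / b + 1 := add_div_le s' L b hb
      have h6 : u.count true ≤ d * (L / b) + 2 * d := by
        have := Nat.mul_le_mul_left d h5
        rw [Nat.mul_add, Nat.mul_add] at this
        omega
      have h7 : d * (L / b) + 2 * d ≤ t + d * ((L - t) / b) := by
        have h8 : L / b ≤ (L - t) / b + t / b + 1 := by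
          have := add_div_le (L - t) t b hb
          rw [Nat.sub_add_cancel hLt.le] at this
          exact this
        have := Nat.mul_le_mul_left d h8
        rw [Nat.mul_add, Nat.mul_add] at this
        omega
      have h9 : d * ((L - t) / b) ≤ (v.take (L - t)).count true := hL (L - t) (by omega)
      omega
    · -- factor overlaps the 1-block
      have hu2 : u = List.replicate (t - s) true ++ v.take (L - (t - s)) := by
        have h0 : s - t = 0 := by omega
        rw [hu, hdrop, h0, List.drop_zero, List.take_append,
          List.take_replicate, List.length_replicate, min_eq_right (by omega)]
      have hcnt : u.count true = (t - s) + (v.take (L - (t - s))).count true := by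
        rw [hu2, List.count_append]; simp
      have harg : L - (t - s) = (L - t) + s := by omega
      have h10 : (v.take ((L - t) + s)).count true ≤ (v.take (L - t)).count true + s := by
        rw [cnt_split v (L - t) s]
        have := List.count_le_length (a := true) (l := (v.drop (L - t)).take s)
        have h11 : ((v.drop (L - t)).take s).length ≤ s := by simp
        omega
      rw [hcnt, harg]
      omega

-- L1: prefix upper bound for join of blocks
lemma join_take_count_le (b d : ℕ) (hb : 0 < b) :
    ∀ (bs : List (List Bool)), (∀ l ∈ bs, l.length = b ∧ l.count true ≤ d) →
    ∀ ℓ, ((bs.flatten).take ℓ).count true ≤ d * (ℓ / b) + d := by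
  intro bs
  induction bs with
  | nil => intro _ ℓ; simp
  | cons B rest ih =>
    intro h ℓ
    obtain ⟨hBl, hBc⟩ := h B (by simp)
    have hrest : ∀ l ∈ rest, l.length = b ∧ l.count true ≤ d := fun l hl => h l (by simp [hl])
    rw [List.flatten_cons, List.take_append, List.count_append]
    have h1 : (B.take ℓ).count true ≤ d :=
      le_trans ((List.take_sublist ℓ B).count_le true) hBc
    rcases le_or_gt ℓ b with hle | hlt
    · have : ℓ - B.length = 0 := by omega
      rw [this]
      simpa using le_trans (by simpa using h1) (Nat.le_add_left d (d * (ℓ / b)))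
    · have h2 := ih hrest (ℓ - B.length)
      rw [hBl] at h2 ⊢
      have hdiv : (ℓ - b) / b + 1 = ℓ / b := (Nat.div_eq_sub_div hb hlt.le).symm
      calc (B.take ℓ).count true + ((rest.flatten).take (ℓ - b)).count true
          ≤ d + (d * ((ℓ - b) / b) + d) := Nat.add_le_add h1 h2
        _ = d * ((ℓ - b) / b + 1) + d := by ring
        _ = d * (ℓ / b) + d := by rw [hdiv]

-- L2: prefix lower bound
lemma join_take_count_ge (b d : ℕ) (hb : 0 < b) :
    ∀ (bs : List (List Bool)), (∀ l ∈ bs, l.length = b ∧ d ≤ l.count true) →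
    ∀ ℓ, ℓ ≤ b * bs.length → d * (ℓ / b) ≤ ((bs.flatten).take ℓ).count true := by
  intro bs
  induction bs with
  | nil => intro _ ℓ hℓ; simp at hℓ; simp [hℓ]
  | cons B rest ih =>
    intro h ℓ hℓ
    obtain ⟨hBl, hBc⟩ := h B (by simp)
    have hrest : ∀ l ∈ rest, l.length = b ∧ d ≤ l.count true := fun l hl => h l (by simp [hl])
    rw [List.flatten_cons, List.take_append, List.count_append]
    rcases lt_or_ge ℓ b with hlt | hle
    · have : ℓ / b = 0 := Nat.div_eq_of_lt hlt
      simp [this]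
    · have hBtake : B.take ℓ = B := List.take_of_length_le (by omega)
      have h2 : d * ((ℓ - b) / b) ≤ ((rest.flatten).take (ℓ - B.length)).count true := by
        rw [hBl]
        apply ih hrest
        rw [List.length_cons, Nat.mul_succ] at hℓ; omega
      rw [hBl] at h2
      rw [hBtake, hBl]
      have hdiv : ℓ / b = (ℓ - b) / b + 1 := Nat.div_eq_sub_div hb hle
      rw [hdiv]
      calc d * ((ℓ - b) / b + 1) = d * ((ℓ - b) / b) + d := by ring
        _ ≤ ((rest.flatten).take (ℓ - b)).count true + B.count true := Nat.add_le_add h2 hBc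
        _ = B.count true + ((rest.flatten).take (ℓ - b)).count true := by omega


section blocks
variable (b d t q r : ℕ)

def blk (S : Finset (Fin b)) : List Bool := (List.finRange b).map (fun j => decide (j ∈ S))

lemma blk_length (S : Finset (Fin b)) : (blk b S).length = b := by simp [blk]

lemma blk_count (S : Finset (Fin b)) : (blk b S).count true = S.card := by
  rw [blk, List.count_eq_countP, List.countP_map, List.countP_eq_length_filter,
    ← List.toFinset_card_of_nodup ((List.nodup_finRange b).filter _),
    List.toFinset_filter, List.toFinset_finRange]
  congr 1; ext j; simp

lemma blk_injective : Function.Injective (blk b) := by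
  intro S T h
  ext j
  have h' := List.map_inj_left.mp h j (List.mem_finRange j)
  simpa using h'

variable (f : Fin q → {S : Finset (Fin b) // S.card = d})

def bls : List (List Bool) := (List.finRange q).map (fun i => blk b (f i).1)

lemma bls_length : (bls b d q f).length = q := by simp [bls]

lemma bls_mem : ∀ l ∈ bls b d q f, l.length = b ∧ l.count true = d := by
  intro l hl
  simp only [bls, List.mem_map] at hl
  obtain ⟨i, _, rfl⟩ := hl
  exact ⟨blk_length b _, by rw [blk_count]; exact (f i).2⟩

lemma bls_flatten_length : (bls b d q f).flatten.length = q * b := by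
  have h : (bls b d q f).map List.length = List.replicate q b := by
    simp only [bls, List.map_map]
    have : (List.length ∘ fun i => blk b (f i).1) = (fun _ => b) := by
      funext i; simp [blk_length]
    rw [this, List.map_const', List.length_finRange]
  rw [List.length_flatten, h, List.sum_replicate, smul_eq_mul]

def wrd : List Bool :=
  List.replicate t true ++ ((bls b d q f).flatten ++ List.replicate r false)

lemma wrd_length : (wrd b d t q r f).length = t + (q * b + r) := by
  simp only [wrd, List.length_append, List.length_replicate]
  rw [bls_flatten_length]

end blocks
section blocks2
variable (b d t q r : ℕ) (f : Fin q → {S : Finset (Fin b) // S.card = d})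

def vv : List Bool := (bls b d q f).flatten ++ List.replicate r false

lemma vv_length : (vv b d q r f).length = q * b + r := by
  simp only [vv, List.length_append, List.length_replicate]
  rw [bls_flatten_length]

lemma vv_take_le (hb : 0 < b) : ∀ ℓ, ((vv b d q r f).take ℓ).count true ≤ d * (ℓ / b) + d := by
  intro ℓ
  rw [vv, List.take_append, List.count_append]
  have h0 : ((List.replicate r false).take (ℓ - (bls b d q f).flatten.length)).count true = 0 := by
    have h := (List.take_sublist (ℓ - (bls b d q f).flatten.length) (List.replicate r false)).count_le true
    simpa [List.count_replicate] using h
  rw [h0, Nat.add_zero]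
  exact join_take_count_le b d hb (bls b d q f)
    (fun l hl => ⟨(bls_mem b d q f l hl).1, le_of_eq (bls_mem b d q f l hl).2⟩) ℓ

lemma vv_take_ge (hb : 0 < b) (hr : r < b) :
    ∀ ℓ, ℓ ≤ (vv b d q r f).length → d * (ℓ / b) ≤ ((vv b d q r f).take ℓ).count true := by
  intro ℓ hℓ
  rw [vv_length] at hℓ
  have hmem : ∀ l ∈ bls b d q f, l.length = b ∧ d ≤ l.count true :=
    fun l hl => ⟨(bls_mem b d q f l hl).1, le_of_eq (bls_mem b d q f l hl).2.symm⟩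
  have hlen : b * (bls b d q f).length = q * b := by rw [bls_length, Nat.mul_comm]
  rw [vv, List.take_append, List.count_append]
  rcases le_or_gt ℓ (q * b) with hle | hlt
  · have := join_take_count_ge b d hb (bls b d q f) hmem ℓ (by rw [hlen]; exact hle)
    omega
  · have h1 : ℓ / b ≤ q := by
      have : ℓ < (q + 1) * b := by rw [Nat.succ_mul]; omega
      have := (Nat.div_lt_iff_lt_mul hb).mpr this
      omega
    have h2 := join_take_count_ge b d hb (bls b d q f) hmem (q * b) (by rw [hlen])
    rw [Nat.mul_div_cancel q hb] at h2
    have h3 : (bls b d q f).flatten.take ℓ = (bls b d q f).flatten := by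
      apply List.take_of_length_le
      rw [bls_flatten_length]; omega
    have h4 : ((bls b d q f).flatten.take (q*b)) = (bls b d q f).flatten := by
      apply List.take_of_length_le
      rw [bls_flatten_length]
    rw [h3]; rw [h4] at h2
    calc d * (ℓ / b) ≤ d * q := Nat.mul_le_mul_left d h1
      _ ≤ _ := le_trans h2 (Nat.le_add_right _ _)

lemma wrd_pn (hb : 0 < b) (hr : r < b) (ht : d * (t / b) + 3 * d ≤ t) :
    IsPrefixNormal1 (wrd b d t q r f) :=
  pn_of_bounds b d t hb (vv b d q r f) (vv_take_le b d q r f hb)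
    (vv_take_ge b d q r f hb hr) ht

lemma flatten_drop_blocks (hb : 0 < b) :
    ∀ (i : ℕ) (bs : List (List Bool)), (∀ l ∈ bs, l.length = b) →
      bs.flatten.drop (b * i) = (bs.drop i).flatten := by
  intro i
  induction i with
  | zero => intro bs _; simp
  | succ i ih =>
    intro bs h
    cases bs with
    | nil => simp
    | cons B rest =>
      have hB : B.length = b := h B (by simp)
      rw [List.flatten_cons, List.drop_append]
      have h1 : B.drop (b * (i+1)) = [] := by
        apply List.drop_eq_nil_of_le; rw [hB]; nlinarith
      have h2 : b * (i+1) - B.length = b * i := by rw [hB]; ring_nf; omega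
      rw [h1, h2, List.nil_append, ih rest (fun l hl => h l (by simp [hl]))]
      simp

lemma wrd_block_extract (hb : 0 < b) (i : Fin q) :
    ((wrd b d t q r f).drop (t + b * i)).take b = blk b (f i).1 := by
  have h1 : (wrd b d t q r f).drop (t + b * i)
      = ((bls b d q f).flatten ++ List.replicate r false).drop (b * i) := by
    rw [wrd, List.drop_append, List.length_replicate,
      List.drop_replicate]
    have : t - (t + b * i) = 0 := by omega
    rw [this]
    have : t + b * i - t = b * i := by omega
    rw [this]
    simp
  have h2 : (bls b d q f).flatten.drop (b * i) = ((bls b d q f).drop i).flatten :=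
    flatten_drop_blocks b hb i (bls b d q f) (fun l hl => (bls_mem b d q f l hl).1)
  have hiq : (i : ℕ) < (bls b d q f).length := by rw [bls_length]; exact i.2
  have h4 : (bls b d q f)[(i:ℕ)]'hiq = blk b (f i).1 := by
    simp only [bls, List.getElem_map, List.getElem_finRange]
    exact congrArg (fun x => blk b (f x).1) (Fin.ext rfl)
  have h3 : (bls b d q f).drop i = blk b (f i).1 :: (bls b d q f).drop (i + 1) := by
    rw [List.drop_eq_getElem_cons hiq, h4]
  rw [h1, List.drop_append, h2, h3, List.flatten_cons]
  rw [List.append_assoc]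
  exact List.take_left' (blk_length b (f i).1)
end blocks2
section cards
variable (b d t q r : ℕ)

lemma wrd_injective (hb : 0 < b) :
    Function.Injective (wrd b d t q r) := by
  intro f g h
  funext i
  apply Subtype.ext
  apply blk_injective b
  rw [← wrd_block_extract b d t q r f hb i, ← wrd_block_extract b d t q r g hb i, h]

instance pnw_finite (n : ℕ) : Finite {w : List Bool // w.length = n ∧ IsPrefixNormal1 w} := by
  apply Finite.of_injective
    (fun w : {w : List Bool // w.length = n ∧ IsPrefixNormal1 w} =>
      (fun i : Fin n => w.1[(i : ℕ)]'(by rw [w.2.1]; exact i.2) : Fin n → Bool))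
  intro w1 w2 h
  apply Subtype.ext
  apply List.ext_getElem (by rw [w1.2.1, w2.2.1])
  intro i h1 h2
  have := congrFun h ⟨i, by rw [← w1.2.1]; exact h1⟩
  exact this

lemma pnw_lower (n : ℕ) (hb : 0 < b) (hr : r < b) (ht : d * (t / b) + 3 * d ≤ t)
    (hn : t + (q * b + r) = n) : (b.choose d) ^ q ≤ pnw n := by
  classical
  have key : Nat.card (Fin q → {S : Finset (Fin b) // S.card = d})
      ≤ Nat.card {w : List Bool // w.length = n ∧ IsPrefixNormal1 w} := by
    apply Nat.card_le_card_of_injective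
      (fun f => (⟨wrd b d t q r f, by rw [wrd_length]; exact hn,
        wrd_pn b d t q r f hb hr ht⟩ : {w : List Bool // w.length = n ∧ IsPrefixNormal1 w}))
    intro f g h
    exact wrd_injective b d t q r hb (congrArg Subtype.val h)
  have hcard : Nat.card (Fin q → {S : Finset (Fin b) // S.card = d}) = (b.choose d) ^ q := by
    rw [Nat.card_eq_fintype_card, Fintype.card_fun, Fintype.card_finset_len, Fintype.card_fin,
      Fintype.card_fin]
  rw [pnw, ← hcard]
  exact key

lemma choose_middle_lb : 2 ^ b ≤ (b + 1) * b.choose (b / 2) := by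
  have h1 : ∑ i ∈ Finset.range (b + 1), b.choose i = 2 ^ b := Nat.sum_range_choose b
  have h2 : ∑ i ∈ Finset.range (b + 1), b.choose i ≤ (b + 1) * b.choose (b / 2) := by
    calc ∑ i ∈ Finset.range (b + 1), b.choose i
        ≤ ∑ _i ∈ Finset.range (b + 1), b.choose (b / 2) :=
          Finset.sum_le_sum (fun i _ => Nat.choose_le_middle i b)
      _ = (b + 1) * b.choose (b / 2) := by rw [Finset.sum_const, Finset.card_range, smul_eq_mul]
  omega
end cards
set_option maxHeartbeats 1000000

open Filter in
lemma hev_lemma : ∀ᶠ (n:ℕ) in atTop, (Real.logb 2 n)^2 ≤ (n:ℝ) := by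
  have h1 : Real.log =o[atTop] fun x : ℝ => x ^ ((1:ℝ)/2) :=
    isLittleO_log_rpow_atTop (by norm_num)
  have h2 := h1.def (Real.log_pos one_lt_two)
  have h3 : ∀ᶠ (x:ℝ) in atTop, (Real.logb 2 x)^2 ≤ x := by
    filter_upwards [h2, eventually_ge_atTop (1:ℝ)] with x hx hx1
    have hx0 : (0:ℝ) ≤ x := by linarith
    have hlog : 0 ≤ Real.log x := Real.log_nonneg hx1
    have hr : x ^ ((1:ℝ)/2) = Real.sqrt x := (Real.sqrt_eq_rpow x).symm
    rw [Real.norm_eq_abs, Real.norm_eq_abs, abs_of_nonneg hlog, hr,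
      abs_of_nonneg (Real.sqrt_nonneg x)] at hx
    have hlb : Real.logb 2 x ≤ Real.sqrt x := by
      rw [Real.logb, div_le_iff₀ (Real.log_pos one_lt_two)]
      linarith [hx]
    have hlbnn : 0 ≤ Real.logb 2 x := Real.logb_nonneg one_lt_two hx1
    calc (Real.logb 2 x)^2 ≤ (Real.sqrt x)^2 := by nlinarith
      _ = x := Real.sq_sqrt hx0
  exact tendsto_natCast_atTop_atTop.eventually h3

theorem stmt_18 :
    ∃ N : ℕ, ∀ n ≥ N,
      (2 : ℝ) ^ ((n : ℝ) - 4 * Real.sqrt ((n : ℝ) * Real.logb 2 n)) ≤ (pnw n : ℝ) := by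
  have hev := hev_lemma
  rw [Filter.eventually_atTop] at hev
  obtain ⟨N₀, hN₀⟩ := hev
  refine ⟨max N₀ 10000, fun n hn => ?_⟩
  have ha2 : (Real.logb 2 n)^2 ≤ (n:ℝ) := hN₀ n (le_trans (le_max_left _ _) hn)
  have hn4 : 10000 ≤ n := le_trans (le_max_right _ _) hn
  set a : ℝ := Real.logb 2 n with hadef
  set s : ℝ := Real.sqrt ((n:ℝ) * a) with hsdef
  have hncast : (10000:ℝ) ≤ (n:ℝ) := by exact_mod_cast hn4
  have hn0 : (2:ℝ) ≤ (n:ℝ) := by linarith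
  have hnpos : (0:ℝ) < n := by linarith
  have ha1 : (1:ℝ) ≤ a := by
    have h1 : Real.logb 2 2 ≤ Real.logb 2 n := Real.logb_le_logb_of_le one_lt_two two_pos hn0
    rwa [Real.logb_self_eq_one one_lt_two] at h1
  have hapos : (0:ℝ) < a := by linarith
  have hna : (0:ℝ) ≤ (n:ℝ) * a := by positivity
  have hs2 : s^2 = (n:ℝ) * a := Real.sq_sqrt hna
  have hspos : (0:ℝ) < s := Real.sqrt_pos.mpr (by positivity)
  have hs40 : (40:ℝ) ≤ s := by
    rw [hsdef]
    apply (Real.le_sqrt (by norm_num) hna).mpr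
    nlinarith
  have han : a ≤ (n:ℝ)/100 := by nlinarith
  have hsn : s ≤ (n:ℝ)/10 := by
    have h1 : (n:ℝ) * a ≤ ((n:ℝ)/10)^2 := by nlinarith
    calc s ≤ Real.sqrt (((n:ℝ)/10)^2) := Real.sqrt_le_sqrt h1
      _ = (n:ℝ)/10 := Real.sqrt_sq (by linarith)
  -- natural number parameters
  set F : ℕ := ⌊s⌋₊ with hFdef
  set b : ℕ := 2*(F/4) + 2 with hbdef
  set d : ℕ := F/4 + 1 with hddef
  set t : ℕ := 3*b with htdef
  have hbpos : 0 < b := by omega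
  have hb2d : b = 2*d := by omega
  have hF1 : (F:ℝ) ≤ s := Nat.floor_le (le_of_lt hspos)
  have hF2 : s < (F:ℝ) + 1 := Nat.lt_floor_add_one s
  have hdivF : 4*(F/4) ≤ F ∧ F ≤ 4*(F/4) + 3 := by omega
  have hbR : (b:ℝ) = 2*((F/4 : ℕ):ℝ) + 2 := by rw [hbdef]; push_cast; ring
  have hb_lo : s/2 ≤ (b:ℝ) := by
    have h1 : ((F:ℝ)) ≤ 4*((F/4:ℕ):ℝ) + 3 := by exact_mod_cast hdivF.2
    rw [hbR]; linarith
  have hb_hi : (b:ℝ) ≤ s/2 + 2 := by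
    have h1 : 4*((F/4:ℕ):ℝ) ≤ (F:ℝ) := by exact_mod_cast hdivF.1
    rw [hbR]; linarith
  have hbRpos : (0:ℝ) < (b:ℝ) := by exact_mod_cast hbpos
  have h4b : 4*(b:ℝ) ≤ (n:ℝ) := by linarith
  have htR : (t:ℝ) = 3*(b:ℝ) := by rw [htdef]; push_cast; ring
  have htn : t ≤ n := by
    have h1 : (t:ℝ) ≤ (n:ℝ) := by rw [htR]; linarith
    exact_mod_cast h1
  set q : ℕ := (n - t)/b with hqdef
  set r : ℕ := (n - t) % b with hrdef
  have hr : r < b := Nat.mod_lt _ hbpos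
  have hnqr : t + (q*b + r) = n := by
    have h1 := Nat.div_add_mod (n - t) b
    rw [← hqdef, ← hrdef] at h1
    have h2 : q * b = b * q := Nat.mul_comm q b
    omega
  have ht_cond : d * (t/b) + 3*d ≤ t := by
    have h3 : t/b = 3 := by rw [htdef]; exact Nat.mul_div_cancel 3 hbpos
    rw [h3]; omega
  have hpnw : ((b.choose d)^q : ℕ) ≤ pnw n := pnw_lower b d t q r n hbpos hr ht_cond hnqr
  -- real bounds on q
  have hq_ub : (q:ℝ) ≤ (n:ℝ)/(b:ℝ) := by
    have h1 : b * q ≤ n := by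
      have h2 := Nat.div_add_mod (n - t) b
      rw [← hqdef, ← hrdef] at h2
      omega
    have h2 : (b:ℝ) * (q:ℝ) ≤ (n:ℝ) := by exact_mod_cast h1
    rw [le_div_iff₀ hbRpos]; linarith
  have hqb_lb : (n:ℝ) - 4*(b:ℝ) ≤ (q:ℝ)*(b:ℝ) := by
    have hcast : (t:ℝ) + ((q:ℝ)*(b:ℝ) + (r:ℝ)) = (n:ℝ) := by exact_mod_cast hnqr
    have hrR : (r:ℝ) < (b:ℝ) := by exact_mod_cast hr
    linarith
  -- logarithm bound
  have hbn1 : (1:ℝ) ≤ (b:ℝ)+1 := by linarith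
  have hL0 : 0 ≤ Real.logb 2 ((b:ℝ)+1) := Real.logb_nonneg one_lt_two hbn1
  have hpow10 : ((b:ℝ)+1)^10 ≤ (n:ℝ)^9 := by
    have h1 : (b:ℝ)+1 ≤ s + 3 := by linarith
    have h2 : ((b:ℝ)+1)^2 ≤ 2*((n:ℝ)*a) := by nlinarith
    have h4 : (((b:ℝ)+1)^2)^5 ≤ (2*((n:ℝ)*a))^5 := pow_le_pow_left₀ (by positivity) h2 5
    have ha_n : a ≤ (n:ℝ) := by nlinarith
    have h6 : a^5 ≤ (n:ℝ)^3 := by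
      have h6a : a^2 * a^2 ≤ (n:ℝ)*(n:ℝ) :=
        mul_le_mul ha2 ha2 (by positivity) (by linarith)
      calc a^5 = (a^2 * a^2) * a := by ring
        _ ≤ ((n:ℝ)*(n:ℝ)) * a := by
            apply mul_le_mul_of_nonneg_right h6a (by linarith)
        _ ≤ ((n:ℝ)*(n:ℝ)) * (n:ℝ) := by
            apply mul_le_mul_of_nonneg_left ha_n (by positivity)
        _ = (n:ℝ)^3 := by ring
    have h7 : (32:ℝ)*(n:ℝ)^5*(n:ℝ)^3 ≤ (n:ℝ)^9 := by
      have h0 : (0:ℝ) ≤ (n:ℝ)^8 := by positivity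
      calc (32:ℝ)*(n:ℝ)^5*(n:ℝ)^3 = 32*(n:ℝ)^8 := by ring
        _ ≤ (n:ℝ)*(n:ℝ)^8 := by nlinarith
        _ = (n:ℝ)^9 := by ring
    calc ((b:ℝ)+1)^10 = (((b:ℝ)+1)^2)^5 := by ring
      _ ≤ (2*((n:ℝ)*a))^5 := h4
      _ = 32*(n:ℝ)^5*a^5 := by ring
      _ ≤ 32*(n:ℝ)^5*(n:ℝ)^3 := by
          have : (0:ℝ) ≤ 32*(n:ℝ)^5 := by positivity
          nlinarith
      _ ≤ (n:ℝ)^9 := h7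
  have hL9 : Real.logb 2 ((b:ℝ)+1) ≤ (9/10)*a := by
    have h1 : Real.logb 2 (((b:ℝ)+1)^10) = 10 * Real.logb 2 ((b:ℝ)+1) := by
      rw [Real.logb_pow]; norm_num
    have h2 : Real.logb 2 (((b:ℝ)+1)^10) ≤ Real.logb 2 ((n:ℝ)^9) :=
      Real.logb_le_logb_of_le one_lt_two (by positivity) hpow10
    have h3 : Real.logb 2 ((n:ℝ)^9) = 9*a := by rw [Real.logb_pow]; push_cast; ring
    linarith
  -- the exponent inequality
  have hexp : (n:ℝ) - 4*s + (q:ℝ)*Real.logb 2 ((b:ℝ)+1) ≤ (b:ℝ)*(q:ℝ) := by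
    have h1 : (q:ℝ)*Real.logb 2 ((b:ℝ)+1) ≤ ((n:ℝ)/(b:ℝ))*((9/10)*a) := by
      apply mul_le_mul hq_ub hL9 hL0 (by positivity)
    have hb' : (n:ℝ)/(b:ℝ) ≤ 2*(n:ℝ)/s := by
      have h2 : (n:ℝ)/(b:ℝ) ≤ (n:ℝ)/(s/2) :=
        div_le_div_of_nonneg_left (by linarith) (by linarith) hb_lo
      have h3 : (n:ℝ)/(s/2) = 2*(n:ℝ)/s := by field_simp
      linarith
    have h2 : ((n:ℝ)/(b:ℝ))*((9/10)*a) ≤ (9/5)*s := by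
      have h4 : ((n:ℝ)/(b:ℝ))*((9/10)*a) ≤ (2*(n:ℝ)/s)*((9/10)*a) := by
        apply mul_le_mul_of_nonneg_right hb' (by positivity)
      have h5 : (2*(n:ℝ)/s)*((9/10)*a) = (9/5)*((n:ℝ)*a)/s := by ring
      have h6 : (9/5)*((n:ℝ)*a)/s = (9/5)*s := by
        rw [← hs2]; field_simp
      linarith
    have h3 : (n:ℝ) - 2*s - 8 ≤ (q:ℝ)*(b:ℝ) := by linarith
    linarith [h1, h2, h3, hs40, mul_comm (b:ℝ) (q:ℝ)]
  -- assemble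
  have hd : d = b/2 := by omega
  have hcb : (2:ℝ)^b ≤ ((b:ℝ)+1) * ((b.choose d : ℕ):ℝ) := by
    have h1 := choose_middle_lb b
    rw [← hd] at h1
    exact_mod_cast h1
  have hCpos : (0:ℝ) < ((b.choose d : ℕ):ℝ) := by
    have := Nat.choose_pos (show d ≤ b by omega)
    exact_mod_cast this
  have hkey : (2:ℝ)^((n:ℝ)-4*s) * ((b:ℝ)+1)^q ≤ (2:ℝ)^(b*q) := by
    have e1 : ((b:ℝ)+1)^q = (2:ℝ)^((q:ℝ) * Real.logb 2 ((b:ℝ)+1)) := by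
      rw [mul_comm, Real.rpow_mul (by norm_num : (0:ℝ) ≤ 2),
        Real.rpow_logb two_pos (by norm_num) (by linarith), Real.rpow_natCast]
    have e2 : ((2:ℝ)^(b*q) : ℝ) = (2:ℝ)^(((b*q : ℕ)):ℝ) := (Real.rpow_natCast 2 (b*q)).symm
    rw [e1, e2, ← Real.rpow_add two_pos]
    apply Real.rpow_le_rpow_of_exponent_le one_le_two
    rw [Nat.cast_mul]
    linarith [hexp]
  have hmid : (2:ℝ)^((n:ℝ) - 4*s) ≤ ((b.choose d : ℕ):ℝ)^q := by
    have h5 : ((2:ℝ)^(b*q)) = ((2:ℝ)^b)^q := by rw [pow_mul]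
    have h6 : ((2:ℝ)^b)^q ≤ (((b:ℝ)+1) * ((b.choose d:ℕ):ℝ))^q :=
      pow_le_pow_left₀ (by positivity) hcb q
    have h7 : (((b:ℝ)+1) * ((b.choose d:ℕ):ℝ))^q = ((b:ℝ)+1)^q * (((b.choose d:ℕ)):ℝ)^q :=
      mul_pow _ _ q
    have hbq : (0:ℝ) < ((b:ℝ)+1)^q := by positivity
    have h8 : (2:ℝ)^((n:ℝ)-4*s) * ((b:ℝ)+1)^q
        ≤ (((b.choose d:ℕ)):ℝ)^q * ((b:ℝ)+1)^q := by
      calc (2:ℝ)^((n:ℝ)-4*s) * ((b:ℝ)+1)^q ≤ (2:ℝ)^(b*q) := hkey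
        _ = ((2:ℝ)^b)^q := h5
        _ ≤ ((b:ℝ)+1)^q * (((b.choose d:ℕ)):ℝ)^q := by rw [← h7]; exact h6
        _ = (((b.choose d:ℕ)):ℝ)^q * ((b:ℝ)+1)^q := by ring
    exact le_of_mul_le_mul_right h8 hbq
  calc (2:ℝ)^((n:ℝ) - 4*s) ≤ ((b.choose d : ℕ):ℝ)^q := hmid
    _ = (((b.choose d)^q : ℕ) : ℝ) := by push_cast; ring
    _ ≤ (pnw n : ℝ) := by exact_mod_cast hpnw
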